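/- De Caen's lower bound: in a finite probability space, if P(A_i) > 0 for all i, then P(⋃_{i=1}^N A_i) ≥ ∑_{i=1}^N P(A_i)² / (∑_{j=1}^N P(A_i ∩ A_j)). -/

import Mathlib

open MeasureTheory Finset

set_option maxHeartbeats 1000000 in
theorem de_caen_bound {Ω : Type*} [Fintype Ω] [MeasurableSpace Ω]
    [DiscreteMeasurableSpace Ω] (P : Measure Ω) [IsProbabilityMeasure P] (N : ℕ)
    (A : Fin N → Set Ω) (hpos : ∀ i, 0 < (P (A i)).toReal) :
    (P (⋃ i, A i)).toReal ≥
      ∑ i : Fin N, (P (A i)).toReal ^ 2 / (∑ j : Fin N, (P (A i ∩ A j)).toReal) := by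
  classical
  set p : Ω → ℝ := fun ω => (P {ω}).toReal with hp
  have hp0 : ∀ ω, 0 ≤ p ω := fun ω => ENNReal.toReal_nonneg
  -- measure of any set as a finite sum
  have hmeas : ∀ S : Set Ω, (P S).toReal = ∑ ω ∈ S.toFinset, p ω := by
    intro S
    have h1 : S = ⋃ ω ∈ S.toFinset, {ω} := by ext x; simp
    have h2 : P S = ∑ ω ∈ S.toFinset, P {ω} := by
      conv_lhs => rw [h1]
      rw [measure_biUnion_finset]
      · intro a _ b _ hab
        simp [Set.disjoint_singleton, hab]
      · intro b _; exact MeasurableSet.singleton b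
    rw [h2, ENNReal.toReal_sum]
    intro a _; exact measure_ne_top P _
  have hmeas' : ∀ S : Set Ω, (P S).toReal = ∑ ω : Ω, if ω ∈ S then p ω else 0 := by
    intro S
    rw [hmeas, ← Finset.sum_filter]
    apply Finset.sum_congr _ fun _ _ => rfl
    ext x; simp
  -- degree function
  set d : Ω → ℕ := fun ω => (Finset.univ.filter fun i => ω ∈ A i).card with hd
  have hd_pos : ∀ i (ω : Ω), ω ∈ A i → 0 < d ω := by
    intro i ω hω
    exact Finset.card_pos.2 ⟨i, by simp [hω]⟩
  -- inner sum identity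
  have hinner : ∀ i, ∑ j : Fin N, (P (A i ∩ A j)).toReal
      = ∑ ω ∈ (A i).toFinset, p ω * d ω := by
    intro i
    have step : ∀ j, (P (A i ∩ A j)).toReal
        = ∑ ω ∈ (A i).toFinset, if ω ∈ A j then p ω else 0 := by
      intro j
      rw [hmeas, Set.toFinset_inter, ← Finset.sum_filter]
      congr 1
      ext x; simp
    calc ∑ j : Fin N, (P (A i ∩ A j)).toReal
        = ∑ j : Fin N, ∑ ω ∈ (A i).toFinset, if ω ∈ A j then p ω else 0 := by
          exact Finset.sum_congr rfl fun j _ => step j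
      _ = ∑ ω ∈ (A i).toFinset, ∑ j : Fin N, if ω ∈ A j then p ω else 0 :=
          Finset.sum_comm
      _ = ∑ ω ∈ (A i).toFinset, p ω * d ω := by
          refine Finset.sum_congr rfl fun ω _ => ?_
          rw [Finset.sum_ite, Finset.sum_const, Finset.sum_const_zero, add_zero,
            nsmul_eq_mul, mul_comm, hd]
  -- Cauchy–Schwarz per i
  have hCS : ∀ i, (P (A i)).toReal ^ 2 / (∑ j : Fin N, (P (A i ∩ A j)).toReal)
      ≤ ∑ ω ∈ (A i).toFinset, p ω / d ω := by
    intro i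
    have hSpos : 0 < ∑ j : Fin N, (P (A i ∩ A j)).toReal := by
      have hii : 0 < (P (A i ∩ A i)).toReal := by simpa using hpos i
      refine lt_of_lt_of_le hii ?_
      exact Finset.single_le_sum (f := fun j => (P (A i ∩ A j)).toReal)
        (fun j _ => ENNReal.toReal_nonneg) (Finset.mem_univ i)
    rw [div_le_iff₀ hSpos, hinner, hmeas]
    calc (∑ ω ∈ (A i).toFinset, p ω) ^ 2
        = (∑ ω ∈ (A i).toFinset,
            Real.sqrt (p ω / d ω) * Real.sqrt (p ω * d ω)) ^ 2 := by
          congr 1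
          refine Finset.sum_congr rfl fun ω hω => ?_
          have hdω : (0:ℝ) < d ω := by
            exact_mod_cast hd_pos i ω (Set.mem_toFinset.1 hω)
          rw [← Real.sqrt_mul (div_nonneg (hp0 ω) hdω.le)]
          have : p ω / ↑(d ω) * (p ω * ↑(d ω)) = p ω ^ 2 := by
            field_simp
          rw [this, Real.sqrt_sq (hp0 ω)]
      _ ≤ (∑ ω ∈ (A i).toFinset, Real.sqrt (p ω / d ω) ^ 2) *
            (∑ ω ∈ (A i).toFinset, Real.sqrt (p ω * d ω) ^ 2) :=
          Finset.sum_mul_sq_le_sq_mul_sq _ _ _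
      _ = (∑ ω ∈ (A i).toFinset, p ω / d ω) * (∑ ω ∈ (A i).toFinset, p ω * d ω) := by
          congr 1 <;> refine Finset.sum_congr rfl fun ω hω => ?_
          · have hdω : (0:ℝ) ≤ d ω := Nat.cast_nonneg _
            exact Real.sq_sqrt (div_nonneg (hp0 ω) hdω)
          · have hdω : (0:ℝ) ≤ d ω := Nat.cast_nonneg _
            exact Real.sq_sqrt (mul_nonneg (hp0 ω) hdω)
  -- final double counting
  have hfinal : ∑ i : Fin N, ∑ ω ∈ (A i).toFinset, p ω / d ω
      = (P (⋃ i, A i)).toReal := by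
    have reindex : ∀ i : Fin N, ∑ ω ∈ (A i).toFinset, p ω / d ω
        = ∑ ω : Ω, if ω ∈ A i then p ω / d ω else 0 := by
      intro i
      rw [← Finset.sum_filter]
      apply Finset.sum_congr _ fun _ _ => rfl
      ext x; simp
    calc ∑ i : Fin N, ∑ ω ∈ (A i).toFinset, p ω / d ω
        = ∑ i : Fin N, ∑ ω : Ω, if ω ∈ A i then p ω / d ω else 0 :=
          Finset.sum_congr rfl fun i _ => reindex i
      _ = ∑ ω : Ω, ∑ i : Fin N, if ω ∈ A i then p ω / d ω else 0 := Finset.sum_comm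
      _ = ∑ ω : Ω, if ω ∈ (⋃ i, A i) then p ω else 0 := by
          refine Finset.sum_congr rfl fun ω _ => ?_
          rw [Finset.sum_ite, Finset.sum_const, Finset.sum_const_zero, add_zero,
            nsmul_eq_mul]
          by_cases hω : ω ∈ ⋃ i, A i
          · obtain ⟨i, hi⟩ := Set.mem_iUnion.1 hω
            have hdω : (0:ℝ) < d ω := by exact_mod_cast hd_pos i ω hi
            rw [if_pos hω]
            field_simp
            simp only [hd]; ring
          · have : (Finset.univ.filter fun i => ω ∈ A i) = ∅ := by
              refine Finset.filter_false_of_mem fun i _ hi => ?_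
              exact hω (Set.mem_iUnion.2 ⟨i, hi⟩)
            simp [this, hω]
      _ = (P (⋃ i, A i)).toReal := (hmeas' _).symm
  calc (P (⋃ i, A i)).toReal = ∑ i : Fin N, ∑ ω ∈ (A i).toFinset, p ω / d ω :=
        hfinal.symm
    _ ≥ ∑ i : Fin N, (P (A i)).toReal ^ 2 / (∑ j : Fin N, (P (A i ∩ A j)).toReal) :=
        Finset.sum_le_sum fun i _ => hCS i
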